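/- An ACB graph B=(X,Y,E) has bipartite Dilworth number at most k if and only if B contains no induced subgraph isomorphic to B_{k+1}. -/

import Mathlib

namespace ACB

variable {X Y : Type*}

/-- Neighborhood (in Y) of a vertex x of the bipartite graph with edge relation E. -/
def Nb (E : X → Y → Prop) (x : X) : Set Y := {y | E x y}

/-- Neighborhood (in X) of a vertex y. -/
def NbY (E : X → Y → Prop) (y : Y) : Set X := {x | E x y}

/-- Mirror (bipartite complement). -/
def Mir (E : X → Y → Prop) : X → Y → Prop := fun x y => ¬ E x y

/-- B contains an induced 3K₂: three disjoint edges with no other edges among the six vertices. -/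
def Has3K2 (E : X → Y → Prop) : Prop :=
  ∃ (x : Fin 3 → X) (y : Fin 3 → Y), Function.Injective x ∧ Function.Injective y ∧
    ∀ i j, E (x i) (y j) ↔ i = j

/-- B contains an induced 2K₂. -/
def Has2K2 (E : X → Y → Prop) : Prop :=
  ∃ (x : Fin 2 → X) (y : Fin 2 → Y), Function.Injective x ∧ Function.Injective y ∧
    ∀ i j, E (x i) (y j) ↔ i = j

/-- B contains an induced chordless cycle C_{2k} (k vertices in each class). -/
def HasCycle (E : X → Y → Prop) (k : ℕ) : Prop :=
  ∃ (x : Fin k → X) (y : Fin k → Y), Function.Injective x ∧ Function.Injective y ∧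
    ∀ i j, E (x i) (y j) ↔ (j.val = i.val ∨ j.val = (i.val + 1) % k)

/-- B is chordal bipartite: no induced cycle of length ≥ 6. -/
def ChordalBip (E : X → Y → Prop) : Prop := ∀ k, 3 ≤ k → ¬ HasCycle E k

/-- B is an ACB graph: no induced 3K₂, C₆ or C₈. -/
def ACBGraph (E : X → Y → Prop) : Prop :=
  ¬ Has3K2 E ∧ ¬ HasCycle E 3 ∧ ¬ HasCycle E 4

/-- A finset of X whose neighborhoods are pairwise incomparable. -/
def XAntichain (E : X → Y → Prop) (S : Finset X) : Prop :=
  (S : Set X).Pairwise fun a b => ¬ Nb E a ⊆ Nb E b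

def YAntichain (E : X → Y → Prop) (S : Finset Y) : Prop :=
  (S : Set Y).Pairwise fun a b => ¬ NbY E a ⊆ NbY E b

/-- X-Dilworth number ∇_B(X). -/
noncomputable def dilwX [Fintype X] (E : X → Y → Prop) : ℕ :=
  sSup {n | ∃ S : Finset X, XAntichain E S ∧ S.card = n}

/-- Y-Dilworth number ∇_B(Y). -/
noncomputable def dilwY [Fintype Y] (E : X → Y → Prop) : ℕ :=
  sSup {n | ∃ S : Finset Y, YAntichain E S ∧ S.card = n}

/-- Bipartite Dilworth number. -/
noncomputable def bipDilw [Fintype X] [Fintype Y] (E : X → Y → Prop) : ℕ :=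
  max (dilwX E) (dilwY E)

/-- The graph D_k (1-indexed vertices x_{i+1}, y_{j+1} for i j : Fin (3k-4)):
x_I y_J an edge iff |I-J| ≤ k-2 and {I,J} ∩ {k-1,…,2k-2} ≠ ∅. -/
def Drel (k : ℕ) (i j : Fin (3*k-4)) : Prop :=
  i.val ≤ j.val + (k-2) ∧ j.val ≤ i.val + (k-2) ∧
    ((k-1 ≤ i.val+1 ∧ i.val+1 ≤ 2*k-2) ∨ (k-1 ≤ j.val+1 ∧ j.val+1 ≤ 2*k-2))

/-- The graph B_k: x_I adjacent to y_J iff I ≤ J ≤ I+k-2 (1-indexed). -/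
def Brel (k : ℕ) (i : Fin k) (j : Fin (2*k-2)) : Prop :=
  i.val ≤ j.val ∧ j.val ≤ i.val + (k-2)

/-- split_X(B): complete the first color class to a clique. -/
def splitA (E : X → Y → Prop) : SimpleGraph (X ⊕ Y) :=
  SimpleGraph.fromRel fun a b => match a, b with
    | Sum.inl _, Sum.inl _ => True
    | Sum.inl x, Sum.inr y => E x y
    | _, _ => False

/-- split_Y(B): complete the second color class to a clique. -/
def splitB (E : X → Y → Prop) : SimpleGraph (X ⊕ Y) :=
  SimpleGraph.fromRel fun a b => match a, b with
    | Sum.inr _, Sum.inr _ => True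
    | Sum.inl x, Sum.inr y => E x y
    | _, _ => False

/-- bip(G) for a graph on X ⊕ Y: keep only the cross edges, as a bipartite edge relation. -/
def bipRel (G : SimpleGraph (X ⊕ Y)) : X → Y → Prop :=
  fun x y => G.Adj (Sum.inl x) (Sum.inr y)

variable {E : X → Y → Prop}

/-- `b` is between `a` and `c`: N(b) ⊆ N(a) ∪ N(c). -/
def Mid (E : X → Y → Prop) (b a c : X) : Prop := ∀ y, E b y → E a y ∨ E c y

lemma Mid.symm {b a c : X} (h : Mid E b a c) : Mid E b c a :=
  fun y hy => (h y hy).symm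

lemma noC6 (hACB : ACBGraph E) {a b c : X} {p q r : Y}
    (hab : a ≠ b) (hac : a ≠ c) (hbc : b ≠ c)
    (hap : E a p) (hbp : ¬ E b p) (hcp : E c p)
    (haq : ¬ E a q) (hbq : E b q) (hcq : E c q)
    (har : E a r) (hbr : E b r) (hcr : ¬ E c r) : False := by
  apply hACB.2.1
  have hpq : p ≠ q := fun h => haq (h ▸ hap)
  have hpr : p ≠ r := fun h => hbp (h ▸ hbr)
  have hqr : q ≠ r := fun h => hcr (h ▸ hcq)
  refine ⟨![a, c, b], ![r, p, q], ?_, ?_, ?_⟩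
  · intro i j h
    fin_cases i <;> fin_cases j <;> simp_all
  · intro i j h
    fin_cases i <;> fin_cases j <;> simp_all
  · intro i j
    fin_cases i <;> fin_cases j <;>
      simp_all [Fin.isValue]

lemma no3K2 (hACB : ACBGraph E) {a b c : X} {p q r : Y}
    (hab : a ≠ b) (hac : a ≠ c) (hbc : b ≠ c)
    (hap : E a p) (hbp : ¬ E b p) (hcp : ¬ E c p)
    (haq : ¬ E a q) (hbq : E b q) (hcq : ¬ E c q)
    (har : ¬ E a r) (hbr : ¬ E b r) (hcr : E c r) : False := by
  apply hACB.1
  have hpq : p ≠ q := fun h => haq (h ▸ hap)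
  have hpr : p ≠ r := fun h => har (h ▸ hap)
  have hqr : q ≠ r := fun h => hbr (h ▸ hbq)
  refine ⟨![a, b, c], ![p, q, r], ?_, ?_, ?_⟩
  · intro i j h
    fin_cases i <;> fin_cases j <;> simp_all
  · intro i j h
    fin_cases i <;> fin_cases j <;> simp_all
  · intro i j
    fin_cases i <;> fin_cases j <;> simp_all [Fin.isValue]

lemma noC8 (hACB : ACBGraph E) {a b c d : X} {u s t r : Y}
    (hab : a ≠ b) (hac : a ≠ c) (had : a ≠ d) (hbc : b ≠ c) (hbd : b ≠ d) (hcd : c ≠ d)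
    (hau : E a u) (hbu : ¬ E b u) (hcu : ¬ E c u) (hdu : E d u)
    (has : E a s) (hbs : E b s) (hcs : ¬ E c s) (hds : ¬ E d s)
    (hat : ¬ E a t) (hbt : E b t) (hct : E c t) (hdt : ¬ E d t)
    (har : ¬ E a r) (hbr : ¬ E b r) (hcr : E c r) (hdr : E d r) : False := by
  apply hACB.2.2
  have hus : u ≠ s := fun h => hds (h ▸ hdu)
  have hut : u ≠ t := fun h => hat (h ▸ hau)
  have hur : u ≠ r := fun h => har (h ▸ hau)
  have hst : s ≠ t := fun h => hat (h ▸ has)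
  have hsr : s ≠ r := fun h => har (h ▸ has)
  have htr : t ≠ r := fun h => hbr (h ▸ hbt)
  refine ⟨![a, b, c, d], ![u, s, t, r], ?_, ?_, ?_⟩
  · intro i j h
    fin_cases i <;> fin_cases j <;> simp_all
  · intro i j h
    fin_cases i <;> fin_cases j <;> simp_all
  · intro i j
    fin_cases i <;> fin_cases j <;> simp_all [Fin.isValue]

section Antichain

variable {S : Finset X} (hACB : ACBGraph E) (hA : XAntichain E S)

lemma priv (hA : XAntichain E S) {a b : X} (ha : a ∈ S) (hb : b ∈ S) (hab : a ≠ b) :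
    ∃ y, E a y ∧ ¬ E b y := by
  have h := hA ha hb hab
  simp only [Set.not_subset] at h
  obtain ⟨y, h1, h2⟩ := h
  exact ⟨y, h1, h2⟩

include hACB hA in
/-- 3K₂-freeness: in any triple of an antichain, some vertex is between the two others. -/
lemma atLeastOne {a b c : X} (ha : a ∈ S) (hb : b ∈ S) (hc : c ∈ S)
    (hab : a ≠ b) (hac : a ≠ c) (hbc : b ≠ c) :
    Mid E a b c ∨ Mid E b a c ∨ Mid E c a b := by
  by_contra h
  push_neg at h
  obtain ⟨h1, h2, h3⟩ := h
  simp only [Mid, not_forall] at h1 h2 h3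
  obtain ⟨p, hp, hp'⟩ := h1
  obtain ⟨q, hq, hq'⟩ := h2
  obtain ⟨r, hr, hr'⟩ := h3
  push_neg at hp' hq' hr'
  exact no3K2 hACB hab hac hbc hp hp'.1 hp'.2 hq'.1 hq hq'.2 hr'.1 hr'.2 hr

include hACB hA in
/-- C₆-freeness: if `b` is between `a` and `c` then N(a) ∩ N(c) ⊆ N(b). -/
lemma interSub {a b c : X} (ha : a ∈ S) (hb : b ∈ S) (hc : c ∈ S)
    (hab : a ≠ b) (hac : a ≠ c) (hbc : b ≠ c) (h : Mid E b a c) :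
    ∀ y, E a y → E c y → E b y := by
  intro y hay hcy
  by_contra hby
  obtain ⟨q, hbq, haq⟩ := priv hA hb ha hab.symm
  obtain ⟨r, hbr, hcr⟩ := priv hA hb hc hbc
  have hcq : E c q := (h q hbq).resolve_left haq
  have har : E a r := (h r hbr).resolve_right hcr
  exact noC6 hACB hab hac hbc hay hby hcy haq hbq hcq har hbr hcr

include hACB hA in
/-- C₆-freeness: two vertices of an antichain triple cannot both be in the middle. -/
lemma midExcl {a b c : X} (ha : a ∈ S) (hb : b ∈ S) (hc : c ∈ S)
    (hab : a ≠ b) (hac : a ≠ c) (hbc : b ≠ c)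
    (h1 : Mid E a b c) (h2 : Mid E b a c) : False := by
  obtain ⟨p, hap, hbp⟩ := priv hA ha hb hab
  obtain ⟨q, hbq, haq⟩ := priv hA hb ha hab.symm
  obtain ⟨r, har, hcr⟩ := priv hA ha hc hac
  have hcp : E c p := (h1 p hap).resolve_left hbp
  have hcq : E c q := (h2 q hbq).resolve_left haq
  have hbr : E b r := (h1 r har).resolve_right hcr
  exact noC6 hACB hab hac hbc hap hbp hcp haq hbq hcq har hbr hcr

include hACB hA in
/-- The key four-point configuration lemma (uses 3K₂- and C₈-freeness). -/
lemma core4 {a b c d : X} (ha : a ∈ S) (hb : b ∈ S) (hc : c ∈ S) (hd : d ∈ S)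
    (hab : a ≠ b) (hac : a ≠ c) (had : a ≠ d) (hbc : b ≠ c) (hbd : b ≠ d) (hcd : c ≠ d)
    (h1 : Mid E b a c) (h2 : Mid E c b d)
    {y : Y} (hby : E b y) (hcy : E c y) (hay : ¬ E a y) (hdy : ¬ E d y) : False := by
  have I1 : ∀ z, E a z → E c z → E b z := interSub hACB hA ha hb hc hab hac hbc h1
  have I2 : ∀ z, E b z → E d z → E c z := interSub hACB hA hb hc hd hbc hbd hcd h2
  obtain ⟨u, hau, hbu⟩ := priv hA ha hb hab
  have hcu : ¬ E c u := fun hcu => hbu (I1 u hau hcu)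
  by_cases hdu : E d u
  · -- u has trace {a,d}: build a C₈
    obtain ⟨s, hbs, hcs⟩ := priv hA hb hc hbc
    have has : E a s := (h1 s hbs).resolve_right hcs
    have hds : ¬ E d s := fun hds => hcs (I2 s hbs hds)
    obtain ⟨r, hcr, hbr⟩ := priv hA hc hb hbc.symm
    have hdr : E d r := (h2 r hcr).resolve_left hbr
    have har : ¬ E a r := fun har => hbr (I1 r har hcr)
    exact noC8 hACB hab hac had hbc hbd hcd hau hbu hcu hdu has hbs hcs hds hay hby hcy hdy
      har hbr hcr hdr
  · obtain ⟨v, hdv, hcv⟩ := priv hA hd hc hcd.symm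
    have hbv : ¬ E b v := fun hbv => hcv (I2 v hbv hdv)
    by_cases hav : E a v
    · obtain ⟨s, hbs, hcs⟩ := priv hA hb hc hbc
      have has : E a s := (h1 s hbs).resolve_right hcs
      have hds : ¬ E d s := fun hds => hcs (I2 s hbs hds)
      obtain ⟨r, hcr, hbr⟩ := priv hA hc hb hbc.symm
      have hdr : E d r := (h2 r hcr).resolve_left hbr
      have har : ¬ E a r := fun har => hbr (I1 r har hcr)
      exact noC8 hACB hab hac had hbc hbd hcd hav hbv hcv hdv has hbs hcs hds hay hby hcy hdy
        har hbr hcr hdr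
    · exact no3K2 hACB hab had hbd hau hbu hdu hay hby hdy hav hbv hdv

include hACB hA in
lemma chA {a b c d : X} (ha : a ∈ S) (hb : b ∈ S) (hc : c ∈ S) (hd : d ∈ S)
    (hab : a ≠ b) (hac : a ≠ c) (had : a ≠ d) (hbc : b ≠ c) (hbd : b ≠ d) (hcd : c ≠ d)
    (h1 : Mid E b a c) (h2 : Mid E c b d) : Mid E c a d := by
  intro y hcy
  by_cases hdy : E d y
  · exact Or.inr hdy
  by_cases hay : E a y
  · exact Or.inl hay
  have hby : E b y := (h2 y hcy).resolve_right hdy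
  exact absurd (core4 hACB hA ha hb hc hd hab hac had hbc hbd hcd h1 h2 hby hcy hay hdy) id

include hACB hA in
lemma chB {a b c d : X} (ha : a ∈ S) (hb : b ∈ S) (hc : c ∈ S) (hd : d ∈ S)
    (hab : a ≠ b) (hac : a ≠ c) (had : a ≠ d) (hbc : b ≠ c) (hbd : b ≠ d) (hcd : c ≠ d)
    (h1 : Mid E b a c) (h2 : Mid E c b d) : Mid E b a d := by
  intro y hby
  by_cases hdy : E d y
  · exact Or.inr hdy
  by_cases hay : E a y
  · exact Or.inl hay
  have hcy : E c y := (h1 y hby).resolve_left hay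
  exact absurd (core4 hACB hA ha hb hc hd hab hac had hbc hbd hcd h1 h2 hby hcy hay hdy) id

include hACB hA in
lemma tr2 {a b c d : X} (ha : a ∈ S) (hb : b ∈ S) (hc : c ∈ S) (hd : d ∈ S)
    (hab : a ≠ b) (hac : a ≠ c) (had : a ≠ d) (hbc : b ≠ c) (hbd : b ≠ d) (hcd : c ≠ d)
    (h1 : Mid E b a c) (h2 : Mid E c a d) : Mid E c b d := by
  intro y hcy
  by_cases hdy : E d y
  · exact Or.inr hdy
  have hay : E a y := (h2 y hcy).resolve_right hdy
  exact Or.inl (interSub hACB hA ha hb hc hab hac hbc h1 y hay hcy)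

include hACB hA in
lemma trA {a b c d : X} (ha : a ∈ S) (hb : b ∈ S) (hc : c ∈ S) (hd : d ∈ S)
    (hab : a ≠ b) (hac : a ≠ c) (had : a ≠ d) (hbc : b ≠ c) (hbd : b ≠ d) (hcd : c ≠ d)
    (h1 : Mid E b a c) (h2 : Mid E c a d) : Mid E b a d :=
  chB hACB hA ha hb hc hd hab hac had hbc hbd hcd h1
    (tr2 hACB hA ha hb hc hd hab hac had hbc hbd hcd h1 h2)

end Antichain

section Extreme

variable {S : Finset X}

/-- An extreme vertex of an antichain: never strictly between two others. -/
def IsExt (E : X → Y → Prop) (S : Finset X) (e : X) : Prop :=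
  e ∈ S ∧ ∀ u ∈ S, ∀ v ∈ S, u ≠ e → v ≠ e → u ≠ v → ¬ Mid E e u v

/-- Helper for the inductive step: if `e'` is extreme in `S.erase a`, `Mid e' u a`
and `a` is strictly between `s` and `t`, we get a contradiction. -/
lemma ext_step (hACB : ACBGraph E) (hA : XAntichain E S) {a e' u s t : X}
    (haS : a ∈ S) (he'S : e' ∈ S) (huS : u ∈ S) (hsS : s ∈ S) (htS : t ∈ S)
    (he'a : e' ≠ a) (hua : u ≠ a) (hue' : u ≠ e')
    (hsa : s ≠ a) (hta : t ≠ a) (hst : s ≠ t)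
    (hext : ∀ p ∈ S, ∀ q ∈ S, p ≠ e' → q ≠ e' → p ≠ a → q ≠ a → p ≠ q → ¬ Mid E e' p q)
    (hMue : Mid E e' u a) (hMa : Mid E a s t) : False := by
  have hae' : a ≠ e' := Ne.symm he'a
  have hau : a ≠ u := Ne.symm hua
  have he'u : e' ≠ u := Ne.symm hue'
  -- final blow: from `Mid a p e'` with p ∈ S, p ∉ {a, e', u}, contradiction with extremeness
  have final : ∀ p ∈ S, p ≠ a → p ≠ e' → p ≠ u → Mid E a p e' → False := by
    intro p hpS hpa hpe' hpu hM
    exact hext p hpS u huS hpe' hue' hpa hua hpu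
      (chA hACB hA hpS haS he'S huS hpa hpe' hpu hae' hau he'u hM hMue.symm)
  by_cases hse' : s = e'
  · subst hse'
    by_cases htu : t = u
    · subst htu
      exact midExcl hACB hA haS he'S htS hae' hau he'u hMa hMue.symm
    · exact final t htS hta (Ne.symm hst) htu hMa.symm
  by_cases hte' : t = e'
  · subst hte'
    by_cases hsu : s = u
    · subst hsu
      exact midExcl hACB hA haS he'S hsS hae' hau he'u hMa.symm hMue.symm
    · exact final s hsS hsa hst hsu hMa
  -- now s ≠ e' and t ≠ e'
  have hat : a ≠ t := Ne.symm hta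
  have has : a ≠ s := Ne.symm hsa
  have he't : e' ≠ t := fun h => hte' h.symm
  have he's : e' ≠ s := fun h => hse' h.symm
  by_cases hus : u = s
  · subst hus
    have step : Mid E a e' t :=
      tr2 hACB hA huS he'S haS htS hue' hua hst he'a he't hat hMue hMa
    exact final t htS hta hte' (Ne.symm hst) step.symm
  by_cases hut : u = t
  · subst hut
    have step : Mid E a e' s :=
      tr2 hACB hA huS he'S haS hsS hue' hua (Ne.symm hst) he'a he's has hMue hMa.symm
    exact final s hsS hsa hse' hst step.symm
  rcases atLeastOne hACB hA huS haS htS hua hut hat with hM1 | hM1 | hM1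
  · -- u between a and t
    have step1 : Mid E a u s :=
      tr2 hACB hA htS huS haS hsS (fun h => hut h.symm) hta (Ne.symm hst) hua hus has
        hM1.symm hMa.symm
    have step2 : Mid E a e' s :=
      tr2 hACB hA huS he'S haS hsS hue' hua hus he'a he's has hMue step1
    exact final s hsS hsa hse' (Ne.symm hus) step2.symm
  · -- a between u and t
    have step : Mid E a e' t :=
      tr2 hACB hA huS he'S haS htS hue' hua hut he'a he't hat hMue hM1
    exact final t htS hta hte' (Ne.symm hut) step.symm
  · -- t between u and a
    rcases atLeastOne hACB hA he'S htS haS he't he'a hta with hM2 | hM2 | hM2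
    · have step : Mid E a e' s :=
        tr2 hACB hA htS he'S haS hsS hte' hta (Ne.symm hst) he'a he's has hM2 hMa.symm
      exact final s hsS hsa hse' (Ne.symm hus) step.symm
    · have step : Mid E a s e' :=
        chB hACB hA hsS haS htS he'S hsa hst hse' hat hae' hte' hMa hM2.symm
      exact final s hsS hsa hse' (Ne.symm hus) step
    · exact final t htS hta hte' (Ne.symm hut) hM2.symm

/-- Every nonempty antichain in an ACB graph has an extreme vertex. -/
lemma exists_ext (hACB : ACBGraph E) :
    ∀ S : Finset X, XAntichain E S → S.Nonempty → ∃ e, IsExt E S e := by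
  intro S
  induction S using Finset.strongInduction with
  | _ S ih =>
    intro hA hne
    classical
    obtain ⟨a, haS⟩ := hne
    by_cases hS' : (S.erase a).Nonempty
    · have hsub : S.erase a ⊂ S := Finset.erase_ssubset haS
      obtain ⟨e', he'⟩ := ih (S.erase a) hsub
        (hA.mono (by exact_mod_cast Finset.erase_subset a S)) hS'
      obtain ⟨he'S', hextS'⟩ := he'
      have he'S : e' ∈ S := Finset.mem_of_mem_erase he'S'
      have he'a : e' ≠ a := Finset.ne_of_mem_erase he'S'
      by_cases hgood : ∀ u ∈ S, ∀ v ∈ S, u ≠ e' → v ≠ e' → u ≠ v → ¬ Mid E e' u v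
      · exact ⟨e', he'S, hgood⟩
      · push_neg at hgood
        obtain ⟨u, huS, v, hvS, hue', hve', huv, hMid⟩ := hgood
        have hext : ∀ p ∈ S, ∀ q ∈ S, p ≠ e' → q ≠ e' → p ≠ a → q ≠ a → p ≠ q →
            ¬ Mid E e' p q := by
          intro p hp q hq hpe' hqe' hpa hqa hpq
          exact hextS' p (Finset.mem_erase.2 ⟨hpa, hp⟩) q (Finset.mem_erase.2 ⟨hqa, hq⟩)
            hpe' hqe' hpq
        -- one of u, v must be a
        have hcases : u = a ∨ v = a := by
          by_contra h
          push_neg at h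
          exact hext u huS v hvS hue' hve' h.1 h.2 huv hMid
        -- reduce to the case v = a
        have key : ∀ w ∈ S, w ≠ a → w ≠ e' → Mid E e' w a → ∃ e, IsExt E S e := by
          intro w hwS hwa hwe' hMwa
          refine ⟨a, haS, ?_⟩
          intro s hsS t htS hsa hta hst hMa
          exact ext_step hACB hA haS he'S hwS hsS htS he'a hwa hwe' hsa hta hst hext hMwa hMa
        rcases hcases with h | h
        · subst h
          exact key v hvS (Ne.symm huv) hve' hMid.symm
        · subst h
          exact key u huS huv hue' hMid
    · refine ⟨a, haS, ?_⟩
      intro u huS v hvS hua hva huv hM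
      have hu : u ∈ S.erase a := Finset.mem_erase.2 ⟨hua, huS⟩
      rw [Finset.not_nonempty_iff_eq_empty.1 hS'] at hu
      exact absurd hu (Finset.notMem_empty u)
end Extreme

section Listing

variable {S : Finset X}

/-- Any antichain in an ACB graph can be listed so that each vertex is between
any earlier and any later vertex. -/
lemma exists_listing (hACB : ACBGraph E) (hA : XAntichain E S) :
    ∃ l : List X, l.Nodup ∧ l.length = S.card ∧ (∀ x ∈ l, x ∈ S) ∧
      ∀ i j k : Fin l.length, i < j → j < k →
        Mid E (l.get j) (l.get i) (l.get k) := by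
  classical
  rcases S.eq_empty_or_nonempty with rfl | hne
  · exact ⟨[], List.nodup_nil, rfl, by simp, fun i => absurd i.2 (by simp)⟩
  obtain ⟨e, heS, hext⟩ := exists_ext hACB S hA hne
  set α := {x // x ∈ S}
  let r : α → α → Prop := fun u v => u = v ∨ (u : X) = e ∨ ((v : X) ≠ e ∧ Mid E u e v)
  haveI : DecidableRel r := Classical.decRel r
  haveI htot : IsTotal α r := by
    constructor
    intro x y
    by_cases hxy : x = y
    · exact Or.inl (Or.inl hxy)
    by_cases hxe : (x : X) = e
    · exact Or.inl (Or.inr (Or.inl hxe))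
    by_cases hye : (y : X) = e
    · exact Or.inr (Or.inr (Or.inl hye))
    have hxy' : (x : X) ≠ (y : X) := fun h => hxy (Subtype.ext h)
    rcases atLeastOne hACB hA heS x.2 y.2 (fun h => hxe h.symm) (fun h => hye h.symm) hxy'
      with hM | hM | hM
    · exact absurd hM (hext x x.2 y y.2 hxe hye hxy')
    · exact Or.inl (Or.inr (Or.inr ⟨hye, hM⟩))
    · exact Or.inr (Or.inr (Or.inr ⟨hxe, hM⟩))
  haveI hanti : IsAntisymm α r := by
    constructor
    intro x y hxy hyx
    by_contra hne'
    have hxy' : (x : X) ≠ (y : X) := fun h => hne' (Subtype.ext h)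
    rcases hxy with h | h | ⟨hye, hMx⟩
    · exact hne' h
    · rcases hyx with h' | h' | ⟨hxe, hMy⟩
      · exact hne' h'.symm
      · exact hxy' (h.trans h'.symm)
      · exact hxe h
    · rcases hyx with h' | h' | ⟨hxe, hMy⟩
      · exact hne' h'.symm
      · exact hye h'
      · exact midExcl hACB hA x.2 y.2 heS hxy' hxe hye hMx.symm hMy.symm
  haveI htrans : IsTrans α r := by
    constructor
    intro x y z hxy hyz
    by_cases hxy0 : x = y
    · exact hxy0 ▸ hyz
    by_cases hyz0 : y = z
    · exact hyz0 ▸ hxy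
    by_cases hxz : x = z
    · exact Or.inl hxz
    by_cases hxe : (x : X) = e
    · exact Or.inr (Or.inl hxe)
    rcases hxy with h | h | ⟨hye, hMx⟩
    · exact absurd h hxy0
    · exact absurd h hxe
    rcases hyz with h | h | ⟨hze, hMy⟩
    · exact absurd h hyz0
    · exact absurd h hye
    have hxy' : (x : X) ≠ (y : X) := fun h => hxy0 (Subtype.ext h)
    have hxz' : (x : X) ≠ (z : X) := fun h => hxz (Subtype.ext h)
    have hyz' : (y : X) ≠ (z : X) := fun h => hyz0 (Subtype.ext h)
    refine Or.inr (Or.inr ⟨hze, ?_⟩)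
    exact trA hACB hA heS x.2 y.2 z.2 (fun h => hxe h.symm) (fun h => hye h.symm)
      (fun h => hze h.symm) hxy' hxz' hyz' hMx hMy
  let l₀ : List α := Finset.sort Finset.univ r
  refine ⟨l₀.map Subtype.val, ?_, ?_, ?_, ?_⟩
  · exact (Finset.sort_nodup _ r).map Subtype.val_injective
  · rw [List.length_map, Finset.length_sort, Finset.card_univ, Fintype.card_coe]
  · intro x hx
    obtain ⟨⟨x', hx'⟩, _, rfl⟩ := List.mem_map.1 hx
    exact hx'
  · intro i j k hij hjk
    have hlen : (l₀.map Subtype.val).length = l₀.length := List.length_map _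
    have hget : ∀ i : Fin (l₀.map Subtype.val).length,
        (l₀.map Subtype.val).get i = (l₀.get (Fin.cast hlen i) : X) := by
      intro i
      simp only [List.get_eq_getElem, List.getElem_map, Fin.coe_cast]
    have hsorted := Finset.pairwise_sort Finset.univ r
    have hnd := Finset.sort_nodup Finset.univ r
    have hndinj := List.nodup_iff_injective_get.1 hnd
    have hij' : Fin.cast hlen i < Fin.cast hlen j := hij
    have hjk' : Fin.cast hlen j < Fin.cast hlen k := hjk
    have r1 := hsorted.rel_get_of_lt hij'
    have r2 := hsorted.rel_get_of_lt hjk'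
    set ui := l₀.get (Fin.cast hlen i)
    set uj := l₀.get (Fin.cast hlen j)
    set uk := l₀.get (Fin.cast hlen k)
    have nij : ui ≠ uj := fun h => absurd (hndinj h) (Fin.ne_of_lt hij')
    have njk : uj ≠ uk := fun h => absurd (hndinj h) (Fin.ne_of_lt hjk')
    have nik : ui ≠ uk := fun h => absurd (hndinj h) (Fin.ne_of_lt (hij'.trans hjk'))
    rw [hget i, hget j, hget k]
    have nij' : (ui : X) ≠ (uj : X) := fun h => nij (Subtype.ext h)
    have njk' : (uj : X) ≠ (uk : X) := fun h => njk (Subtype.ext h)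
    have nik' : (ui : X) ≠ (uk : X) := fun h => nik (Subtype.ext h)
    by_cases hie : (ui : X) = e
    · rcases r2 with h | h | ⟨hke, hM⟩
      · exact absurd h njk
      · exact absurd (h.trans hie.symm) (Ne.symm nij')
      · exact hie ▸ hM
    · rcases r1 with h | h | ⟨hje, hM1⟩
      · exact absurd h nij
      · exact absurd h hie
      rcases r2 with h | h | ⟨hke, hM2⟩
      · exact absurd h njk
      · exact absurd h hje
      exact tr2 hACB hA heS ui.2 uj.2 uk.2 (fun h => hie h.symm) (fun h => hje h.symm)
        (fun h => hke h.symm) nij' nik' njk' hM1 hM2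

end Listing

lemma exists_Bm (hACB : ACBGraph E) {m : ℕ} (hm : 2 ≤ m) {S : Finset X}
    (hA : XAntichain E S) (hcard : S.card = m) :
    ∃ (f : Fin m → X) (g : Fin (2*m-2) → Y), Function.Injective f ∧ Function.Injective g ∧
      ∀ i j, E (f i) (g j) ↔ Brel m i j := by
  obtain ⟨l, hnd, hlen, hmem, hmid⟩ := exists_listing hACB hA
  rw [hcard] at hlen
  let u : Fin m → X := fun i => l.get (Fin.cast hlen.symm i)
  have uinj : Function.Injective u :=
    (List.nodup_iff_injective_get.1 hnd).comp (Fin.cast_injective _)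
  have umem : ∀ i, u i ∈ S := fun i => hmem _ (List.get_mem l _)
  have umid : ∀ i j k : Fin m, i.val < j.val → j.val < k.val →
      Mid E (u j) (u i) (u k) := fun i j k hij hjk => hmid _ _ _ hij hjk
  have une : ∀ {i j : Fin m}, i.val ≠ j.val → u i ≠ u j :=
    fun h hh => h (congrArg Fin.val (uinj hh))
  have uinc : ∀ i j : Fin m, i.val ≠ j.val → ∃ y, E (u i) y ∧ ¬ E (u j) y :=
    fun i j hij => priv hA (umem i) (umem j) (une hij)
  have uI : ∀ i j k : Fin m, i.val < j.val → j.val < k.val →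
      ∀ y, E (u i) y → E (u k) y → E (u j) y := by
    intro i j k hij hjk
    exact interSub hACB hA (umem i) (umem j) (umem k) (une (Nat.ne_of_lt hij))
      (une (Nat.ne_of_lt (hij.trans hjk))) (une (Nat.ne_of_lt hjk))
      (umid i j k hij hjk)
  have gex : ∀ j : Fin (2*m-2), ∃ y, ∀ i : Fin m, E (u i) y ↔ Brel m i j := by
    intro j
    have hj2 := j.isLt
    by_cases hj : j.val + 1 < m
    · obtain ⟨y, hy1, hy2⟩ := uinc ⟨j.val, by omega⟩ ⟨j.val + 1, hj⟩ (by simp)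
      refine ⟨y, fun i => ?_⟩
      have hiff : E (u i) y ↔ i.val ≤ j.val := by
        constructor
        · intro hEy
          by_contra hlt
          push_neg at hlt
          rcases Nat.eq_or_lt_of_le hlt with heq | hlt'
          · exact hy2 (by
              have : i = ⟨j.val + 1, hj⟩ := Fin.ext heq.symm
              exact this ▸ hEy)
          · exact hy2 (uI ⟨j.val, by omega⟩ ⟨j.val + 1, hj⟩ i (by simp) hlt' y hy1 hEy)
        · intro hle
          rcases Nat.eq_or_lt_of_le hle with heq | hlt'
          · have : i = ⟨j.val, by omega⟩ := Fin.ext heq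
            exact this ▸ hy1
          · exact (umid i ⟨j.val, by omega⟩ ⟨j.val + 1, hj⟩ hlt' (by simp) y hy1).resolve_right hy2
      rw [hiff]
      have := i.isLt
      simp only [Brel]
      omega
    · have hs1 : j.val - (m-2) < m := by omega
      have hs0 : j.val - (m-2) - 1 < m := by omega
      obtain ⟨y, hy1, hy2⟩ := uinc ⟨j.val - (m-2), hs1⟩ ⟨j.val - (m-2) - 1, hs0⟩
        (by simp; omega)
      refine ⟨y, fun i => ?_⟩
      have hiff : E (u i) y ↔ j.val - (m-2) ≤ i.val := by
        constructor
        · intro hEy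
          by_contra hlt
          push_neg at hlt
          rcases Nat.eq_or_lt_of_le (Nat.le_sub_one_of_lt hlt) with heq | hlt'
          · exact hy2 (by
              have : i = ⟨j.val - (m-2) - 1, hs0⟩ := Fin.ext heq
              exact this ▸ hEy)
          · exact hy2 (uI i ⟨j.val - (m-2) - 1, hs0⟩ ⟨j.val - (m-2), hs1⟩ hlt' (by simp; omega)
              y hEy hy1)
        · intro hle
          rcases Nat.eq_or_lt_of_le hle with heq | hlt'
          · have : i = ⟨j.val - (m-2), hs1⟩ := Fin.ext heq.symm
            exact this ▸ hy1
          · exact (umid ⟨j.val - (m-2) - 1, hs0⟩ ⟨j.val - (m-2), hs1⟩ i (by simp; omega) hlt'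
              y hy1).resolve_left hy2
      rw [hiff]
      have := i.isLt
      simp only [Brel]
      omega
  choose g hg using gex
  refine ⟨u, g, uinj, ?_, fun i j => hg j i⟩
  intro j1 j2 hgj
  by_contra hne
  have hvne : j1.val ≠ j2.val := fun h => hne (Fin.ext h)
  have hiffs : ∀ i : Fin m, Brel m i j1 ↔ Brel m i j2 := by
    intro i
    rw [← hg j1 i, ← hg j2 i, hgj]
  have h1 := j1.isLt
  have h2 := j2.isLt
  obtain ⟨iv, hivm, hbad⟩ : ∃ iv, iv < m ∧
      ¬((iv ≤ j1.val ∧ j1.val ≤ iv + (m-2)) ↔ (iv ≤ j2.val ∧ j2.val ≤ iv + (m-2))) := by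
    refine ⟨if j1.val < j2.val then (if j2.val + 1 < m then j2.val else j1.val - (m-2))
      else (if j1.val + 1 < m then j1.val else j2.val - (m-2)), ?_, ?_⟩ <;>
      split_ifs <;> omega
  have := hiffs ⟨iv, hivm⟩
  simp only [Brel] at this
  exact hbad this

lemma has3K2_flip (h : Has3K2 (fun y x => E x y)) : Has3K2 E := by
  obtain ⟨x, y, hx, hy, hE⟩ := h
  exact ⟨y, x, hy, hx, fun i j => (hE j i).trans eq_comm⟩

lemma hasCycle3_flip (h : HasCycle (fun y x => E x y) 3) : HasCycle E 3 := by
  obtain ⟨a, b, ha, hb, hE⟩ := h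
  let neg : Fin 3 → Fin 3 := ![0, 2, 1]
  have hneg : Function.Injective neg := by decide
  have key : ∀ i j : Fin 3,
      (((neg i).val = (neg j).val ∨ (neg i).val = ((neg j).val + 1) % 3) ↔
        (j.val = i.val ∨ j.val = (i.val + 1) % 3)) := by decide
  exact ⟨fun i => b (neg i), fun j => a (neg j), hb.comp hneg, ha.comp hneg,
    fun i j => (hE (neg j) (neg i)).trans (key i j)⟩

lemma hasCycle4_flip (h : HasCycle (fun y x => E x y) 4) : HasCycle E 4 := by
  obtain ⟨a, b, ha, hb, hE⟩ := h
  let neg : Fin 4 → Fin 4 := ![0, 3, 2, 1]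
  have hneg : Function.Injective neg := by decide
  have key : ∀ i j : Fin 4,
      (((neg i).val = (neg j).val ∨ (neg i).val = ((neg j).val + 1) % 4) ↔
        (j.val = i.val ∨ j.val = (i.val + 1) % 4)) := by decide
  exact ⟨fun i => b (neg i), fun j => a (neg j), hb.comp hneg, ha.comp hneg,
    fun i j => (hE (neg j) (neg i)).trans (key i j)⟩

lemma ACB_flip (h : ACBGraph E) : ACBGraph (fun y x => E x y) :=
  ⟨fun h3 => h.1 (has3K2_flip h3), fun hc => h.2.1 (hasCycle3_flip hc),
    fun hc => h.2.2 (hasCycle4_flip hc)⟩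

lemma antichain_of_Bm {k : ℕ} (hk : 1 ≤ k)
    (f : Fin (k+1) → X) (g : Fin (2*(k+1)-2) → Y) (hf : Function.Injective f)
    (hE : ∀ i j, E (f i) (g j) ↔ Brel (k+1) i j) :
    ∃ S : Finset X, XAntichain E S ∧ S.card = k + 1 := by
  classical
  refine ⟨Finset.image f Finset.univ, ?_, ?_⟩
  · intro p hp q hq hpq
    simp only [Finset.coe_image, Finset.coe_univ, Set.image_univ, Set.mem_range] at hp hq
    obtain ⟨i, rfl⟩ := hp
    obtain ⟨i', rfl⟩ := hq
    have hii : i.val ≠ i'.val := fun h => hpq (congrArg f (Fin.ext h))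
    have hi := i.isLt
    have hi' := i'.isLt
    have hjlt : (if i.val < i'.val then i.val else i.val + (k-1)) < 2*(k+1)-2 := by
      split_ifs <;> omega
    set jv := if i.val < i'.val then i.val else i.val + (k-1) with hjv
    have hB1 : Brel (k+1) i ⟨jv, hjlt⟩ := by
      simp only [Brel, hjv]
      split_ifs <;> omega
    have hB2 : ¬ Brel (k+1) i' ⟨jv, hjlt⟩ := by
      simp only [Brel, hjv]
      split_ifs <;> omega
    intro hsub
    have h1 : g ⟨jv, hjlt⟩ ∈ Nb E (f i) := (hE i ⟨jv, hjlt⟩).mpr hB1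
    exact hB2 ((hE i' ⟨jv, hjlt⟩).mp (hsub h1))
  · rw [Finset.card_image_of_injective _ hf, Finset.card_univ, Fintype.card_fin]

lemma bdd_dset [Fintype X] (E : X → Y → Prop) :
    BddAbove {n | ∃ S : Finset X, XAntichain E S ∧ S.card = n} := by
  refine ⟨Fintype.card X, ?_⟩
  rintro n ⟨S, _, rfl⟩
  exact (Finset.card_le_univ S).trans (le_of_eq (Finset.card_univ))


/-- an ACB graph has bipartite Dilworth number at most k iff it contains no
induced subgraph isomorphic to B_{k+1} (in either orientation of the color classes). -/
theorem stmt18 (k : ℕ) (hk : 1 ≤ k) {X Y : Type*} [Fintype X] [Fintype Y]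
    (E : X → Y → Prop) (hACB : ACBGraph E) :
    bipDilw E ≤ k ↔
      ¬ ((∃ (f : Fin (k+1) → X) (g : Fin (2*(k+1)-2) → Y),
            Function.Injective f ∧ Function.Injective g ∧
            ∀ i j, E (f i) (g j) ↔ Brel (k+1) i j) ∨
          (∃ (f : Fin (k+1) → Y) (g : Fin (2*(k+1)-2) → X),
            Function.Injective f ∧ Function.Injective g ∧
            ∀ i j, E (g j) (f i) ↔ Brel (k+1) i j)) := by
  constructor
  · intro hle
    rintro (⟨f, g, hf, hg, hE⟩ | ⟨f, g, hf, hg, hE⟩)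
    · obtain ⟨S, hA, hcard⟩ := antichain_of_Bm hk f g hf hE
      have hmem : (k+1) ∈ {n | ∃ S : Finset X, XAntichain E S ∧ S.card = n} := ⟨S, hA, hcard⟩
      have h1 : k+1 ≤ dilwX E := le_csSup (bdd_dset E) hmem
      have h2 : dilwX E ≤ k := le_trans (le_max_left _ _) hle
      omega
    · obtain ⟨S, hA, hcard⟩ := antichain_of_Bm (E := fun y x => E x y) hk f g hf hE
      have hmem : (k+1) ∈ {n | ∃ S : Finset Y, YAntichain E S ∧ S.card = n} := ⟨S, hA, hcard⟩
      have h1 : k+1 ≤ dilwY E := le_csSup (bdd_dset (fun y x => E x y)) hmem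
      have h2 : dilwY E ≤ k := le_trans (le_max_right _ _) hle
      omega
  · intro hno
    by_contra hgt
    rw [not_le] at hgt
    rcases lt_max_iff.mp hgt with hX | hY
    · have hne : {n | ∃ S : Finset X, XAntichain E S ∧ S.card = n}.Nonempty :=
        ⟨0, ∅, by simp [XAntichain], Finset.card_empty⟩
      obtain ⟨S, hA, hcard⟩ := Nat.sSup_mem hne (bdd_dset E)
      obtain ⟨S', hsub, hcard'⟩ := Finset.exists_subset_card_eq (s := S) (n := k+1) (by
        rw [hcard]; unfold dilwX at hX; omega)
      have hA' : XAntichain E S' := hA.mono (Finset.coe_subset.2 hsub)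
      obtain ⟨f, g, hf, hg, hE⟩ := exists_Bm hACB (by omega : 2 ≤ k+1) hA' hcard'
      exact hno (Or.inl ⟨f, g, hf, hg, hE⟩)
    · have hne : {n | ∃ S : Finset Y, YAntichain E S ∧ S.card = n}.Nonempty :=
        ⟨0, ∅, by simp [YAntichain], Finset.card_empty⟩
      obtain ⟨S, hA, hcard⟩ := Nat.sSup_mem hne (bdd_dset (fun y x => E x y))
      obtain ⟨S', hsub, hcard'⟩ := Finset.exists_subset_card_eq (s := S) (n := k+1) (by
        rw [hcard]; unfold dilwY at hY; omega)
      have hA' : XAntichain (fun y x => E x y) S' := hA.mono (Finset.coe_subset.2 hsub)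
      obtain ⟨f, g, hf, hg, hE⟩ := exists_Bm (ACB_flip hACB) (by omega : 2 ≤ k+1) hA' hcard'
      exact hno (Or.inr ⟨f, g, hf, hg, hE⟩)
end ACB
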